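/- For every infinite cardinal λ, the ultrafilter number 𝔲_λ is strictly greater than λ, where 𝔲_λ is the minimal cardinality of a base for a uniform ultrafilter on λ. -/

import Mathlib

open Cardinal Set

/-- `𝔲_λ > λ` for every infinite cardinal `λ`: every base `ℬ`
(with respect to almost-inclusion mod sets of size `< λ`) of a uniform
ultrafilter `U` on `λ` (an infinite type `α`) has cardinality `> λ`. -/
theorem stmt1 {α : Type u} [Infinite α] (U : Ultrafilter α)
    (hUuniform : ∀ A ∈ U, #A = #α)
    (ℬ : Set (Set α))
    (hℬsub : ∀ B ∈ ℬ, B ∈ U)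
    (hℬbase : ∀ X ∈ U, ∃ B ∈ ℬ, #↥(B \ X) < #α) :
    #α < #ℬ := by
  by_contra hlt
  push_neg at hlt
  -- ℬ is nonempty
  obtain ⟨B₀, hB₀, -⟩ := hℬbase univ Filter.univ_mem
  haveI : Nonempty ℬ := ⟨⟨B₀, hB₀⟩⟩
  -- a surjection from α onto ℬ
  obtain ⟨f⟩ := (Cardinal.le_def ↥ℬ α).mp hlt
  have hfsurj : Function.Surjective (Function.invFun (⇑f)) :=
    Function.invFun_surjective f.injective
  set g : α → Set α := fun a => ((Function.invFun (⇑f) a : ↥ℬ) : Set α) with hg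
  have hgmem : ∀ a, g a ∈ ℬ := fun a => (Function.invFun (⇑f) a).2
  have hgsurj : ∀ B ∈ ℬ, ∃ a, g a = B := by
    intro B hB
    obtain ⟨a, ha⟩ := hfsurj ⟨B, hB⟩
    exact ⟨a, by rw [hg]; simp [ha]⟩
  -- an equivalence α ≃ α × α so that each set is enumerated cofinally often
  have hmk : #(α × α) = #α := by
    rw [Cardinal.mk_prod, Cardinal.lift_id,
      Cardinal.mul_eq_self (Cardinal.aleph0_le_mk α)]
  obtain ⟨e⟩ : Nonempty (α ≃ α × α) := Cardinal.eq.mp hmk.symm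
  set g' : α → Set α := fun a => g (e a).1 with hg'
  have hg'U : ∀ a, g' a ∈ U := fun a => hℬsub _ (hgmem _)
  have hg'card : ∀ a, #(g' a) = #α := fun a => hUuniform _ (hg'U a)
  -- a well-order on α of minimal type
  obtain ⟨r, wo, hr⟩ := Cardinal.ord_eq α
  haveI := wo
  have hseg : ∀ a : α, #{b // r b a} < #α := by
    intro a
    rw [← Ordinal.card_typein]
    exact Cardinal.card_typein_lt (r := r) a hr
  -- picking two fresh points of `g' a` at every stage
  have key : ∀ (a : α) (S : Set α), #S < #α →
      ∃ q : α × α, q.1 ∈ g' a ∧ q.2 ∈ g' a ∧ q.1 ∉ S ∧ q.2 ∉ S ∧ q.1 ≠ q.2 := by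
    intro a S hS
    have hD : #↥(g' a \ S) = #α := by
      by_contra hne
      have hlt' : #↥(g' a \ S) < #α :=
        lt_of_le_of_ne (le_trans (Cardinal.mk_le_mk_of_subset diff_subset) (hg'card a).le) hne
      have hsub : g' a ⊆ (g' a \ S) ∪ S := fun x hx => by
        by_cases hxS : x ∈ S
        · exact Or.inr hxS
        · exact Or.inl ⟨hx, hxS⟩
      have : #(g' a) < #α :=
        lt_of_le_of_lt (le_trans (Cardinal.mk_le_mk_of_subset hsub)
          (Cardinal.mk_union_le _ _))
          (Cardinal.add_lt_of_lt (Cardinal.aleph0_le_mk α) hlt' hS)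
      exact absurd (hg'card a) this.ne
    have hnt : Nontrivial ↥(g' a \ S) := by
      rw [← Cardinal.one_lt_iff_nontrivial, hD]
      exact lt_of_lt_of_le Cardinal.one_lt_aleph0 (Cardinal.aleph0_le_mk α)
    obtain ⟨⟨x, hx⟩, ⟨y, hy⟩, hxy⟩ := hnt
    exact ⟨(x, y), hx.1, hy.1, hx.2, hy.2, fun h => hxy (Subtype.ext h)⟩
  -- cardinality bound for the set of previously chosen points
  have hsmall : ∀ (a : α) (ih : ∀ b, r b a → α × α),
      #↥((Set.range fun b : {b // r b a} => (ih b b.2).1) ∪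
         (Set.range fun b : {b // r b a} => (ih b b.2).2)) < #α := by
    intro a ih
    refine lt_of_le_of_lt (Cardinal.mk_union_le _ _) ?_
    exact Cardinal.add_lt_of_lt (Cardinal.aleph0_le_mk α)
      (lt_of_le_of_lt (Cardinal.mk_range_le) (hseg a))
      (lt_of_le_of_lt (Cardinal.mk_range_le) (hseg a))
  -- the transfinite recursion
  set F : (a : α) → ((b : α) → r b a → α × α) → α × α := fun a ih =>
    (key a _ (hsmall a ih)).choose with hF
  set p : α → α × α := wo.wf.fix F with hp
  have hfix : ∀ a, p a = F a fun b _ => p b := fun a => wo.wf.fix_eq F a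
  have hspec : ∀ a, (p a).1 ∈ g' a ∧ (p a).2 ∈ g' a ∧
      ((p a).1 ∉ (Set.range fun b : {b // r b a} => (p b).1) ∪
        (Set.range fun b : {b // r b a} => (p b).2)) ∧
      ((p a).2 ∉ (Set.range fun b : {b // r b a} => (p b).1) ∪
        (Set.range fun b : {b // r b a} => (p b).2)) ∧
      (p a).1 ≠ (p a).2 := by
    intro a
    rw [hfix a]
    exact (key a _ (hsmall a fun b _ => p b)).choose_spec
  -- unpack the recursion's properties
  have hmem1 : ∀ a, (p a).1 ∈ g' a := fun a => (hspec a).1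
  have hmem2 : ∀ a, (p a).2 ∈ g' a := fun a => (hspec a).2.1
  have hfresh1 : ∀ a b, r b a → (p a).1 ≠ (p b).1 ∧ (p a).1 ≠ (p b).2 := by
    intro a b hba
    have h := (hspec a).2.2.1
    simp only [Set.mem_union, Set.mem_range, not_or, not_exists] at h
    exact ⟨fun h' => h.1 ⟨b, hba⟩ h'.symm, fun h' => h.2 ⟨b, hba⟩ h'.symm⟩
  have hfresh2 : ∀ a b, r b a → (p a).2 ≠ (p b).1 ∧ (p a).2 ≠ (p b).2 := by
    intro a b hba
    have h := (hspec a).2.2.2.1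
    simp only [Set.mem_union, Set.mem_range, not_or, not_exists] at h
    exact ⟨fun h' => h.1 ⟨b, hba⟩ h'.symm, fun h' => h.2 ⟨b, hba⟩ h'.symm⟩
  have hne : ∀ a, (p a).1 ≠ (p a).2 := fun a => (hspec a).2.2.2.2
  -- the firsts and the seconds never meet
  have hcross : ∀ a b, (p a).1 ≠ (p b).2 := by
    intro a b
    rcases trichotomous_of r a b with h | h | h
    · exact ((hfresh2 b a h).1).symm
    · exact h ▸ hne a
    · exact (hfresh1 a b h).2
  -- injectivity of firsts and seconds
  have hinj1 : Function.Injective fun a => (p a).1 := by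
    intro a b hab
    by_contra hne'
    rcases trichotomous_of r a b with h | h | h
    · exact (hfresh1 b a h).1 hab.symm
    · exact hne' h
    · exact (hfresh1 a b h).1 hab
  have hinj2 : Function.Injective fun a => (p a).2 := by
    intro a b hab
    by_contra hne'
    rcases trichotomous_of r a b with h | h | h
    · exact (hfresh2 b a h).2 hab.symm
    · exact hne' h
    · exact (hfresh2 a b h).2 hab
  -- the diagonal set
  set X : Set α := Set.range fun a => (p a).1 with hX
  -- cofinal enumeration: every B ∈ ℬ equals g' a for a "large" family of a's
  have hbig : ∀ B ∈ ℬ, ∃ ι : α → α, Function.Injective ι ∧ ∀ c, g' (ι c) = B := by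
    intro B hB
    obtain ⟨a₀, ha₀⟩ := hgsurj B hB
    refine ⟨fun c => e.symm (a₀, c), fun c d hcd => ?_, fun c => ?_⟩
    · have := congrArg e hcd
      simp only [Equiv.apply_symm_apply, Prod.mk.injEq] at this
      exact this.2
    · simp only [hg', Equiv.apply_symm_apply]
      exact ha₀
  -- both X and Xᶜ meet every member of ℬ in a set of full size
  have hXcap : ∀ B ∈ ℬ, #α ≤ #↥(B ∩ X) := by
    intro B hB
    obtain ⟨ι, hιinj, hιB⟩ := hbig B hB
    refine Cardinal.mk_le_of_injective (f := fun c => (⟨(p (ι c)).1,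
      (hιB c) ▸ hmem1 (ι c), Set.mem_range_self (ι c)⟩ : ↥(B ∩ X))) ?_
    intro c d hcd
    exact hιinj (hinj1 (congrArg Subtype.val hcd))
  have hXdiff : ∀ B ∈ ℬ, #α ≤ #↥(B \ X) := by
    intro B hB
    obtain ⟨ι, hιinj, hιB⟩ := hbig B hB
    have hnotX : ∀ c, (p (ι c)).2 ∉ X := by
      intro c hc
      obtain ⟨b, hb⟩ := hc
      exact hcross b (ι c) hb
    refine Cardinal.mk_le_of_injective (f := fun c => (⟨(p (ι c)).2,
      (hιB c) ▸ hmem2 (ι c), hnotX c⟩ : ↥(B \ X))) ?_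
    intro c d hcd
    exact hιinj (hinj2 (congrArg Subtype.val hcd))
  -- conclude: X or Xᶜ is in U, contradicting the base property
  rcases U.mem_or_compl_mem X with hXU | hXU
  · obtain ⟨B, hB, hBX⟩ := hℬbase X hXU
    exact absurd (hXdiff B hB) (not_le.mpr hBX)
  · obtain ⟨B, hB, hBX⟩ := hℬbase Xᶜ hXU
    have : B \ Xᶜ = B ∩ X := by ext x; simp [Set.mem_diff]
    rw [this] at hBX
    exact absurd (hXcap B hB) (not_le.mpr hBX)
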